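/- arXiv:2403.08603 — 2 statements merged into one kernel-verified Lean document; each statement's English description precedes it below -/
import Mathlib

section
/- For γ ∈ (0,∞) and θ > 0, the Mittag-Leffler-type asymptotics lim_{b→∞} b^{−1/γ} log ∑_{n=0}^∞ θ^n b^n / (n!)^γ = γ θ^{1/γ} holds. -/
open Filter
open scoped Topology


lemma aux_succ_le_exp (n : ℕ) (hn : 1 ≤ n) : ((n : ℝ) + 1) ≤ n * Real.exp (1 / n) := by
  have hn0 : (0:ℝ) < n := by exact_mod_cast hn
  have h := Real.add_one_le_exp (1 / (n:ℝ))
  calc ((n:ℝ) + 1) = n * (1/(n:ℝ) + 1) := by field_simp; ring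
    _ ≤ n * Real.exp (1/(n:ℝ)) := by nlinarith [h]

lemma aux_pow_le_factorial_mul_exp (n : ℕ) :
    (n : ℝ) ^ n ≤ (n.factorial : ℝ) * Real.exp n := by
  induction n with
  | zero => simp
  | succ n ih =>
    have key : ((n:ℝ) + 1) ^ n ≤ (n:ℝ) ^ n * Real.exp 1 := by
      rcases Nat.eq_zero_or_pos n with rfl | hn
      · simpa using Real.one_le_exp zero_le_one
      · have h1 : ((n:ℝ) + 1) ≤ n * Real.exp (1 / n) := aux_succ_le_exp n hn
        have hnn : (0:ℝ) ≤ (n:ℝ) + 1 := by positivity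
        calc ((n:ℝ) + 1) ^ n ≤ ((n:ℝ) * Real.exp (1/n)) ^ n := by
              exact pow_le_pow_left₀ hnn h1 n
          _ = (n:ℝ) ^ n * Real.exp (1/n) ^ n := by rw [mul_pow]
          _ = (n:ℝ) ^ n * Real.exp 1 := by
              rw [← Real.exp_nat_mul]
              congr 1
              field_simp
    push_cast
    calc ((n:ℝ)+1) ^ (n+1) = ((n:ℝ)+1) * ((n:ℝ)+1)^n := by ring
      _ ≤ ((n:ℝ)+1) * ((n:ℝ)^n * Real.exp 1) := by
          refine mul_le_mul_of_nonneg_left key (by positivity)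
      _ ≤ ((n:ℝ)+1) * ((n.factorial : ℝ) * Real.exp n * Real.exp 1) := by
          refine mul_le_mul_of_nonneg_left (by nlinarith [Real.exp_pos (1:ℝ), ih]) (by positivity)
      _ = ((n+1).factorial : ℝ) * Real.exp ((n:ℝ)+1) := by
          rw [Nat.factorial_succ, Real.exp_add]
          push_cast
          ring

lemma aux_factorial_le (n : ℕ) (hn : 1 ≤ n) :
    (n.factorial : ℝ) ≤ (n:ℝ) ^ (n+1) * Real.exp (1 - n) := by
  induction n with
  | zero => omega
  | succ n ih =>
    rcases Nat.eq_zero_or_pos n with rfl | hn'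
    · norm_num
    · have ih' := ih hn'
      have key : (n:ℝ) ^ (n+1) * Real.exp 1 ≤ ((n:ℝ)+1) ^ (n+1) := by
        have h1 : (n:ℝ) ≤ ((n:ℝ)+1) * Real.exp (-(1/((n:ℝ)+1))) := by
          have h := Real.add_one_le_exp (-(1/((n:ℝ)+1)))
          have hn0 : (0:ℝ) < (n:ℝ)+1 := by positivity
          have h2 : (n:ℝ)/((n:ℝ)+1) ≤ Real.exp (-(1/((n:ℝ)+1))) := by
            calc (n:ℝ)/((n:ℝ)+1) = -(1/((n:ℝ)+1)) + 1 := by field_simp; ring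
              _ ≤ _ := h
          calc (n:ℝ) = ((n:ℝ)+1) * ((n:ℝ)/((n:ℝ)+1)) := by field_simp
            _ ≤ ((n:ℝ)+1) * Real.exp (-(1/((n:ℝ)+1))) := by
                exact mul_le_mul_of_nonneg_left h2 (by positivity)
        have hcast : (0:ℝ) ≤ (n:ℝ) := by positivity
        calc (n:ℝ) ^ (n+1) * Real.exp 1
            ≤ (((n:ℝ)+1) * Real.exp (-(1/((n:ℝ)+1)))) ^ (n+1) * Real.exp 1 := by
              exact mul_le_mul_of_nonneg_right (pow_le_pow_left₀ hcast h1 _) (by positivity)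
          _ = ((n:ℝ)+1) ^ (n+1) * (Real.exp (-(1/((n:ℝ)+1))) ^ (n+1) * Real.exp 1) := by
              rw [mul_pow]; ring
          _ = ((n:ℝ)+1) ^ (n+1) := by
              rw [← Real.exp_nat_mul, ← Real.exp_add]
              have hz : ((n+1:ℕ):ℝ) * -(1/((n:ℝ)+1)) + 1 = 0 := by
                have hn0 : ((n:ℝ)+1) ≠ 0 := by positivity
                push_cast
                field_simp
                ring
              rw [hz, Real.exp_zero, mul_one]
      have goal' : ((n+1).factorial : ℝ) ≤ ((n:ℝ)+1) ^ (n+1+1) * Real.exp (1 - ((n:ℝ)+1)) := by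
        calc ((n+1).factorial : ℝ) = ((n:ℝ)+1) * (n.factorial : ℝ) := by
              rw [Nat.factorial_succ]; push_cast; ring
          _ ≤ ((n:ℝ)+1) * ((n:ℝ) ^ (n+1) * Real.exp (1 - n)) := by
              exact mul_le_mul_of_nonneg_left ih' (by positivity)
          _ = ((n:ℝ) ^ (n+1) * Real.exp 1) * (((n:ℝ)+1) * Real.exp (-(n:ℝ))) := by
              rw [show (1 - (n:ℝ)) = 1 + (-(n:ℝ)) by ring, Real.exp_add]; ring
          _ ≤ ((n:ℝ)+1) ^ (n+1) * (((n:ℝ)+1) * Real.exp (-(n:ℝ))) := by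
              exact mul_le_mul_of_nonneg_right key (by positivity)
          _ = ((n:ℝ)+1) ^ (n+1+1) * Real.exp (1 - ((n:ℝ)+1)) := by
              rw [show (1 - ((n:ℝ)+1)) = -(n:ℝ) by ring]
              ring
      push_cast
      push_cast at goal'
      exact goal'


section
variable (γ θ : ℝ) (hγ : 0 < γ) (hθ : 0 < θ)

include hθ in
lemma aux_term_pos (b : ℝ) (hb : 0 < b) (n : ℕ) :
    0 < θ ^ n * b ^ n / (n.factorial : ℝ) ^ γ := by
  have h : (0:ℝ) < (n.factorial : ℝ) := by exact_mod_cast n.factorial_pos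
  positivity

include hθ in
lemma aux_log_term (b : ℝ) (hb : 0 < b) (n : ℕ) :
    Real.log (θ ^ n * b ^ n / (n.factorial : ℝ) ^ γ)
      = n * Real.log (θ * b) - γ * Real.log (n.factorial : ℝ) := by
  have h : (0:ℝ) < (n.factorial : ℝ) := by exact_mod_cast n.factorial_pos
  rw [← mul_pow, Real.log_div (by positivity) (by positivity), Real.log_pow,
    Real.log_rpow h]

lemma aux_log_factorial_ge (n : ℕ) :
    (n:ℝ) * Real.log n - n ≤ Real.log (n.factorial : ℝ) := by
  rcases Nat.eq_zero_or_pos n with rfl | hn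
  · simp
  have hfac : (0:ℝ) < (n.factorial : ℝ) := by exact_mod_cast n.factorial_pos
  have hn0 : (0:ℝ) < (n:ℝ) := by exact_mod_cast hn
  have h := aux_pow_le_factorial_mul_exp n
  have h2 : Real.log ((n:ℝ) ^ n) ≤ Real.log ((n.factorial : ℝ) * Real.exp n) :=
    Real.log_le_log (by positivity) h
  rw [Real.log_pow, Real.log_mul hfac.ne' (Real.exp_pos _).ne', Real.log_exp] at h2
  linarith

lemma aux_log_factorial_le (n : ℕ) (hn : 1 ≤ n) :
    Real.log (n.factorial : ℝ) ≤ ((n:ℝ)+1) * Real.log n + (1 - n) := by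
  have hfac : (0:ℝ) < (n.factorial : ℝ) := by exact_mod_cast n.factorial_pos
  have hn0 : (0:ℝ) < (n:ℝ) := by exact_mod_cast hn
  have h := aux_factorial_le n hn
  have h2 : Real.log (n.factorial : ℝ) ≤ Real.log ((n:ℝ) ^ (n+1) * Real.exp (1-n)) :=
    Real.log_le_log hfac h
  rw [Real.log_mul (by positivity) (Real.exp_pos _).ne', Real.log_pow, Real.log_exp] at h2
  push_cast at h2 ⊢
  linarith

include hγ hθ in
lemma aux_term_le (b : ℝ) (hb : 0 < b) (n : ℕ) :
    θ ^ n * b ^ n / (n.factorial : ℝ) ^ γ ≤ Real.exp (γ * (θ*b) ^ (1/γ)) := by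
  set s : ℝ := (θ*b) ^ (1/γ) with hs_def
  have hθb : 0 < θ * b := mul_pos hθ hb
  have hs : 0 < s := Real.rpow_pos_of_pos hθb _
  have hlogθb : Real.log (θ*b) = γ * Real.log s := by
    rw [hs_def, Real.log_rpow hθb]
    field_simp
  rcases Nat.eq_zero_or_pos n with rfl | hn
  · have : θ ^ 0 * b ^ 0 / ((Nat.factorial 0 : ℕ) : ℝ) ^ γ = 1 := by
      simp [Real.one_rpow]
    rw [this]
    exact Real.one_le_exp (by positivity)
  have hn0 : (0:ℝ) < (n:ℝ) := by exact_mod_cast hn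
  have hpos := aux_term_pos γ θ hθ b hb n
  rw [← Real.exp_log hpos]
  apply Real.exp_le_exp.2
  rw [aux_log_term γ θ hθ b hb n, hlogθb]
  have lf := aux_log_factorial_ge n
  have hx : Real.log (s/(n:ℝ)) ≤ s/(n:ℝ) - 1 := Real.log_le_sub_one_of_pos (by positivity)
  rw [Real.log_div hs.ne' hn0.ne'] at hx
  have e1 : (n:ℝ) * Real.log s - (n:ℝ) * Real.log n ≤ s - n := by
    have h2 : (n:ℝ) * (Real.log s - Real.log (n:ℝ)) ≤ (n:ℝ) * (s/(n:ℝ) - 1) :=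
      mul_le_mul_of_nonneg_left hx hn0.le
    have h3 : (n:ℝ) * (s/(n:ℝ) - 1) = s - n := by field_simp
    nlinarith
  nlinarith [mul_le_mul_of_nonneg_left lf hγ.le, mul_le_mul_of_nonneg_left e1 hγ.le]

lemma aux_term_succ (b : ℝ) (hb : 0 < b) (n : ℕ) :
    θ ^ (n+1) * b ^ (n+1) / ((n+1).factorial : ℝ) ^ γ
      = (θ ^ n * b ^ n / (n.factorial : ℝ) ^ γ) * (θ * b / ((n+1 : ℕ) : ℝ) ^ γ) := by
  have hfac : (0:ℝ) < (n.factorial : ℝ) := by exact_mod_cast n.factorial_pos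
  have hcast : (((n+1).factorial : ℕ) : ℝ) = ((n+1:ℕ) : ℝ) * (n.factorial : ℝ) := by
    rw [Nat.factorial_succ]; push_cast; ring
  have hn1 : (0:ℝ) < ((n+1:ℕ) : ℝ) := by positivity
  rw [hcast, Real.mul_rpow hn1.le hfac.le]
  have h1 : ((n+1:ℕ):ℝ) ^ γ ≠ 0 := (Real.rpow_pos_of_pos hn1 _).ne'
  have h2 : (n.factorial : ℝ) ^ γ ≠ 0 := (Real.rpow_pos_of_pos hfac _).ne'
  field_simp
  ring

include hγ hθ in
lemma aux_term_half (b : ℝ) (hb : 0 < b) (n : ℕ)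
    (h : 2 * (θ * b) ≤ ((n+1 : ℕ) : ℝ) ^ γ) :
    θ ^ (n+1) * b ^ (n+1) / ((n+1).factorial : ℝ) ^ γ
      ≤ (1/2) * (θ ^ n * b ^ n / (n.factorial : ℝ) ^ γ) := by
  rw [aux_term_succ γ θ b hb n]
  have hpos := aux_term_pos γ θ hθ b hb n
  have hn1 : (0:ℝ) < ((n+1:ℕ) : ℝ) ^ γ := Real.rpow_pos_of_pos (by positivity) _
  have hθb : 0 < θ * b := mul_pos hθ hb
  have hratio : θ * b / ((n+1:ℕ) : ℝ) ^ γ ≤ 1/2 := by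
    rw [div_le_div_iff₀ hn1 (by norm_num)]
    linarith
  calc (θ ^ n * b ^ n / (n.factorial : ℝ) ^ γ) * (θ * b / ((n+1 : ℕ) : ℝ) ^ γ)
      ≤ (θ ^ n * b ^ n / (n.factorial : ℝ) ^ γ) * (1/2) :=
        mul_le_mul_of_nonneg_left hratio hpos.le
    _ = (1/2) * (θ ^ n * b ^ n / (n.factorial : ℝ) ^ γ) := by ring

include hγ hθ in
lemma aux_summable (b : ℝ) (hb : 0 < b) :
    Summable (fun n : ℕ => θ ^ n * b ^ n / (n.factorial : ℝ) ^ γ) := by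
  apply summable_of_ratio_norm_eventually_le (r := 1/2) (by norm_num)
  filter_upwards [eventually_ge_atTop ⌈(2*(θ*b)) ^ (1/γ)⌉₊] with n hn
  have hθb : 0 < θ * b := mul_pos hθ hb
  have hx : (2*(θ*b)) ^ (1/γ) ≤ ((n+1:ℕ) : ℝ) := by
    have h1 : (2*(θ*b)) ^ (1/γ) ≤ (⌈(2*(θ*b)) ^ (1/γ)⌉₊ : ℝ) := Nat.le_ceil _
    have h2 : ((⌈(2*(θ*b)) ^ (1/γ)⌉₊ : ℕ) : ℝ) ≤ ((n:ℕ):ℝ) := by exact_mod_cast hn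
    push_cast
    linarith
  have hcond : 2 * (θ * b) ≤ ((n+1 : ℕ) : ℝ) ^ γ := by
    have h2 : ((2*(θ*b)) ^ (1/γ)) ^ γ ≤ ((n+1:ℕ) : ℝ) ^ γ :=
      Real.rpow_le_rpow (by positivity) hx hγ.le
    rwa [← Real.rpow_mul (by positivity), one_div_mul_cancel hγ.ne', Real.rpow_one] at h2
  have h := aux_term_half γ θ hγ hθ b hb n hcond
  have hp1 := aux_term_pos γ θ hθ b hb (n+1)
  have hp2 := aux_term_pos γ θ hθ b hb n
  rw [Real.norm_eq_abs, Real.norm_eq_abs, abs_of_pos hp1, abs_of_pos hp2]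
  exact h

end
section
variable (γ θ : ℝ) (hγ : 0 < γ) (hθ : 0 < θ)

include hγ hθ in
lemma aux_tail (b : ℝ) (hb : 0 < b) (N : ℕ)
    (hN : 2*(θ*b) ≤ ((N:ℕ):ℝ) ^ γ) (k : ℕ) :
    θ ^ (k+N) * b ^ (k+N) / ((k+N).factorial : ℝ) ^ γ
      ≤ (θ ^ N * b ^ N / (N.factorial : ℝ) ^ γ) * (1/2)^k := by
  induction k with
  | zero => simp
  | succ k ih =>
    have hcond : 2 * (θ * b) ≤ (((k+N)+1 : ℕ) : ℝ) ^ γ := by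
      refine le_trans hN (Real.rpow_le_rpow (by positivity) ?_ hγ.le)
      push_cast; linarith
    have h := aux_term_half γ θ hγ hθ b hb (k+N) hcond
    have hkN : k+1+N = (k+N)+1 := by omega
    rw [hkN]
    calc θ ^ ((k+N)+1) * b ^ ((k+N)+1) / (((k+N)+1).factorial : ℝ) ^ γ
        ≤ (1/2) * (θ ^ (k+N) * b ^ (k+N) / ((k+N).factorial : ℝ) ^ γ) := h
      _ ≤ (1/2) * ((θ ^ N * b ^ N / (N.factorial : ℝ) ^ γ) * (1/2)^k) := by
          exact mul_le_mul_of_nonneg_left ih (by norm_num)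
      _ = (θ ^ N * b ^ N / (N.factorial : ℝ) ^ γ) * (1/2)^(k+1) := by ring

include hγ hθ in
lemma aux_one_le_f (b : ℝ) (hb : 0 < b) :
    1 ≤ ∑' n : ℕ, θ ^ n * b ^ n / ((n.factorial : ℝ)) ^ γ := by
  have h := Summable.le_tsum (aux_summable γ θ hγ hθ b hb) 0
    (fun j _ => (aux_term_pos γ θ hθ b hb j).le)
  have h0 : θ ^ 0 * b ^ 0 / ((Nat.factorial 0 : ℕ) : ℝ) ^ γ = 1 := by
    simp [Real.one_rpow]
  rwa [h0] at h

include hγ hθ in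
lemma aux_f_le (b : ℝ) (hb : 0 < b) :
    ∑' n : ℕ, θ ^ n * b ^ n / ((n.factorial : ℝ)) ^ γ
      ≤ ((⌊(2*(θ*b)) ^ (1/γ)⌋₊ : ℝ) + 3) * Real.exp (γ * (θ*b) ^ (1/γ)) := by
  set x : ℝ := (2*(θ*b)) ^ (1/γ) with hx_def
  have hθb : 0 < θ * b := mul_pos hθ hb
  have hxpos : 0 < x := Real.rpow_pos_of_pos (by positivity) _
  set N : ℕ := ⌊x⌋₊ + 1 with hN_def
  clear_value N
  clear_value x
  have hxN : x ≤ (N:ℝ) := by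
    have h := Nat.lt_floor_add_one x
    rw [hN_def]
    push_cast
    linarith
  have hN : 2*(θ*b) ≤ ((N:ℕ):ℝ) ^ γ := by
    have h2 : x ^ γ ≤ ((N:ℕ):ℝ) ^ γ := Real.rpow_le_rpow hxpos.le hxN hγ.le
    rwa [hx_def, ← Real.rpow_mul (by positivity), one_div_mul_cancel hγ.ne',
      Real.rpow_one] at h2
  have hsum := aux_summable γ θ hγ hθ b hb
  have hexp : (0:ℝ) < Real.exp (γ * (θ*b) ^ (1/γ)) := Real.exp_pos _
  rw [← Summable.sum_add_tsum_nat_add N hsum]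
  have bound1 : ∑ i ∈ Finset.range N, θ ^ i * b ^ i / ((i.factorial : ℝ)) ^ γ
      ≤ (N:ℝ) * Real.exp (γ * (θ*b) ^ (1/γ)) := by
    calc ∑ i ∈ Finset.range N, θ ^ i * b ^ i / ((i.factorial : ℝ)) ^ γ
        ≤ ∑ _i ∈ Finset.range N, Real.exp (γ * (θ*b) ^ (1/γ)) :=
          Finset.sum_le_sum fun i _ => aux_term_le γ θ hγ hθ b hb i
      _ = (N:ℝ) * Real.exp (γ * (θ*b) ^ (1/γ)) := by
          rw [Finset.sum_const, Finset.card_range, nsmul_eq_mul]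
  have bound2 : ∑' i : ℕ, θ ^ (i+N) * b ^ (i+N) / (((i+N).factorial : ℝ)) ^ γ
      ≤ 2 * Real.exp (γ * (θ*b) ^ (1/γ)) := by
    have hgeo : Summable (fun i : ℕ => (θ ^ N * b ^ N / (N.factorial : ℝ) ^ γ) * (1/2)^i) := by
      apply Summable.mul_left
      exact summable_geometric_of_lt_one (by norm_num) (by norm_num)
    have h1 : ∑' i : ℕ, θ ^ (i+N) * b ^ (i+N) / (((i+N).factorial : ℝ)) ^ γ
        ≤ ∑' i : ℕ, (θ ^ N * b ^ N / (N.factorial : ℝ) ^ γ) * (1/2)^i :=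
      Summable.tsum_le_tsum (aux_tail γ θ hγ hθ b hb N hN) ((summable_nat_add_iff N).2 hsum) hgeo
    have h2 : ∑' i : ℕ, (θ ^ N * b ^ N / (N.factorial : ℝ) ^ γ) * (1/2:ℝ)^i
        = (θ ^ N * b ^ N / (N.factorial : ℝ) ^ γ) * 2 := by
      rw [tsum_mul_left, tsum_geometric_two]
    have h3 := aux_term_le γ θ hγ hθ b hb N
    calc ∑' i : ℕ, θ ^ (i+N) * b ^ (i+N) / (((i+N).factorial : ℝ)) ^ γ
        ≤ (θ ^ N * b ^ N / (N.factorial : ℝ) ^ γ) * 2 := h2 ▸ h1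
      _ ≤ 2 * Real.exp (γ * (θ*b) ^ (1/γ)) := by linarith
  have hNcast : (N:ℝ) = (⌊x⌋₊ : ℝ) + 1 := by rw [hN_def]; push_cast; ring
  calc (∑ i ∈ Finset.range N, θ ^ i * b ^ i / ((i.factorial : ℝ)) ^ γ)
        + ∑' i : ℕ, θ ^ (i+N) * b ^ (i+N) / (((i+N).factorial : ℝ)) ^ γ
      ≤ (N:ℝ) * Real.exp (γ * (θ*b) ^ (1/γ)) + 2 * Real.exp (γ * (θ*b) ^ (1/γ)) :=
        add_le_add bound1 bound2
    _ = ((N:ℝ) + 2) * Real.exp (γ * (θ*b) ^ (1/γ)) := by ring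
    _ = ((⌊x⌋₊ : ℝ) + 3) * Real.exp (γ * (θ*b) ^ (1/γ)) := by rw [hNcast]; ring

include hγ hθ in
lemma aux_f_ge (b : ℝ) (hb : 0 < b) (hθb1 : 1 ≤ θ * b) :
    Real.exp (γ * ((θ*b) ^ (1/γ) - Real.log ((θ*b) ^ (1/γ) + 1) - 2))
      ≤ ∑' n : ℕ, θ ^ n * b ^ n / ((n.factorial : ℝ)) ^ γ := by
  set s : ℝ := (θ*b) ^ (1/γ) with hs_def
  have hθb : 0 < θ * b := mul_pos hθ hb
  have hs : 0 < s := Real.rpow_pos_of_pos hθb _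
  have hs1 : 1 ≤ s := by
    calc (1:ℝ) = (1:ℝ) ^ (1/γ) := (Real.one_rpow _).symm
      _ ≤ (θ*b) ^ (1/γ) := Real.rpow_le_rpow zero_le_one hθb1 (by positivity)
  set n0 : ℕ := ⌊s⌋₊ with hn0_def
  have hn0 : 1 ≤ n0 := Nat.le_floor (by exact_mod_cast hs1)
  have hn0R : (0:ℝ) < (n0:ℝ) := by exact_mod_cast hn0
  have hfl : (n0:ℝ) ≤ s := Nat.floor_le hs.le
  have hlt : s < (n0:ℝ) + 1 := Nat.lt_floor_add_one s
  have hlogθb : Real.log (θ*b) = γ * Real.log s := by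
    rw [hs_def, Real.log_rpow hθb]
    field_simp
  have key : γ * (s - Real.log (s+1) - 2) ≤ Real.log (θ ^ n0 * b ^ n0 / ((n0.factorial : ℝ)) ^ γ) := by
    rw [aux_log_term γ θ hθ b hb n0, hlogθb]
    have lf := aux_log_factorial_le n0 hn0
    have h1 : Real.log (n0:ℝ) ≤ Real.log s := Real.log_le_log hn0R hfl
    have h2 : Real.log s ≤ Real.log (s+1) := Real.log_le_log hs (by linarith)
    nlinarith [mul_le_mul_of_nonneg_left lf hγ.le,
      mul_le_mul_of_nonneg_left (mul_le_mul_of_nonneg_left h1 (by positivity : (0:ℝ) ≤ (n0:ℝ)+1)) hγ.le,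
      mul_le_mul_of_nonneg_left h2 hγ.le,
      mul_le_mul_of_nonneg_left hlt.le hγ.le]
  have hpos := aux_term_pos γ θ hθ b hb n0
  calc Real.exp (γ * (s - Real.log (s+1) - 2))
      ≤ Real.exp (Real.log (θ ^ n0 * b ^ n0 / ((n0.factorial : ℝ)) ^ γ)) := Real.exp_le_exp.2 key
    _ = θ ^ n0 * b ^ n0 / ((n0.factorial : ℝ)) ^ γ := Real.exp_log hpos
    _ ≤ _ := Summable.le_tsum (aux_summable γ θ hγ hθ b hb) n0
        (fun j _ => (aux_term_pos γ θ hθ b hb j).le)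

end
lemma aux_errlim (γ c d : ℝ) (hγ : 0 < γ) (hc : 0 < c) (hd : 0 ≤ d) :
    Tendsto (fun b : ℝ => b ^ (-(1/γ)) * Real.log ((c*b) ^ (1/γ) + d)) atTop (𝓝 0) := by
  have h1γ : 0 < 1/γ := by positivity
  have h1 : Tendsto (fun b:ℝ => b ^ (-(1/γ))) atTop (𝓝 0) := tendsto_rpow_neg_atTop h1γ
  have h2 : Tendsto (fun b:ℝ => b ^ (-(1/γ)) * Real.log b) atTop (𝓝 0) := by
    have h := (isLittleO_log_rpow_atTop h1γ).tendsto_div_nhds_zero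
    refine h.congr' ?_
    filter_upwards [eventually_gt_atTop (0:ℝ)] with b hb
    rw [Real.rpow_neg hb.le, div_eq_mul_inv, mul_comm]
  set K : ℝ := (1/γ) * Real.log c + Real.log (1+d) with hK
  have hg : Tendsto (fun b:ℝ => b ^ (-(1/γ)) * K + (1/γ) * (b ^ (-(1/γ)) * Real.log b))
      atTop (𝓝 0) := by
    have := (h1.mul_const K).add (h2.const_mul (1/γ))
    simpa using this
  apply squeeze_zero' ?_ ?_ hg
  · filter_upwards [eventually_ge_atTop (max 1 (1/c))] with b hb
    have hb1 : (1:ℝ) ≤ b := le_trans (le_max_left _ _) hb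
    have hcb : (1:ℝ) ≤ c*b := by
      have h := le_trans (le_max_right 1 (1/c)) hb
      calc (1:ℝ) = c * (1/c) := by field_simp
        _ ≤ c * b := mul_le_mul_of_nonneg_left h hc.le
    have hX : (1:ℝ) ≤ (c*b) ^ (1/γ) := by
      calc (1:ℝ) = (1:ℝ) ^ (1/γ) := (Real.one_rpow _).symm
        _ ≤ (c*b) ^ (1/γ) := Real.rpow_le_rpow zero_le_one hcb h1γ.le
    exact mul_nonneg (Real.rpow_nonneg (by linarith) _) (Real.log_nonneg (by linarith))
  · filter_upwards [eventually_ge_atTop (max 1 (1/c))] with b hb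
    have hb1 : (1:ℝ) ≤ b := le_trans (le_max_left _ _) hb
    have hb0 : (0:ℝ) < b := by linarith
    have hcb : (1:ℝ) ≤ c*b := by
      have h := le_trans (le_max_right 1 (1/c)) hb
      calc (1:ℝ) = c * (1/c) := by field_simp
        _ ≤ c * b := mul_le_mul_of_nonneg_left h hc.le
    have hX : (1:ℝ) ≤ (c*b) ^ (1/γ) := by
      calc (1:ℝ) = (1:ℝ) ^ (1/γ) := (Real.one_rpow _).symm
        _ ≤ (c*b) ^ (1/γ) := Real.rpow_le_rpow zero_le_one hcb h1γ.le
    have hXpos : (0:ℝ) < (c*b) ^ (1/γ) := by linarith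
    have key : Real.log ((c*b) ^ (1/γ) + d) ≤ K + (1/γ) * Real.log b := by
      have step1 : (c*b) ^ (1/γ) + d ≤ (c*b) ^ (1/γ) * (1+d) := by nlinarith
      have step2 : Real.log ((c*b) ^ (1/γ) + d) ≤ Real.log ((c*b) ^ (1/γ) * (1+d)) :=
        Real.log_le_log (by linarith) step1
      rw [Real.log_mul hXpos.ne' (by linarith : (1:ℝ)+d ≠ 0),
        Real.log_rpow (by linarith : (0:ℝ) < c*b), Real.log_mul hc.ne' hb0.ne'] at step2
      rw [hK]
      linarith
    calc b ^ (-(1/γ)) * Real.log ((c*b) ^ (1/γ) + d)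
        ≤ b ^ (-(1/γ)) * (K + (1/γ) * Real.log b) :=
          mul_le_mul_of_nonneg_left key (Real.rpow_nonneg hb0.le _)
      _ = b ^ (-(1/γ)) * K + (1/γ) * (b ^ (-(1/γ)) * Real.log b) := by ring

/-- Mittag-Leffler asymptotics: for `γ ∈ (0,∞)` and `θ > 0`,
`lim_{b→∞} b^{−1/γ} log ∑_{n≥0} θ^n b^n/(n!)^γ = γ θ^{1/γ}`. -/
theorem statement9 (γ θ : ℝ) (hγ : 0 < γ) (hθ : 0 < θ) :
    Tendsto
      (fun b : ℝ =>
        b ^ (-(1 / γ)) * Real.log (∑' n : ℕ, θ ^ n * b ^ n / (n.factorial : ℝ) ^ γ))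
      atTop (𝓝 (γ * θ ^ (1 / γ))) := by
  set c : ℝ := γ * θ ^ (1 / γ) with hc
  have hL : Tendsto (fun b : ℝ =>
      c - γ * (b ^ (-(1/γ)) * Real.log ((θ*b) ^ (1/γ) + 1)) - 2*γ * b ^ (-(1/γ)))
      atTop (𝓝 c) := by
    have h := ((tendsto_const_nhds (α := ℝ) (x := c) (f := atTop)).sub
      ((aux_errlim γ θ 1 hγ hθ zero_le_one).const_mul γ)).sub
      ((tendsto_rpow_neg_atTop (by positivity : (0:ℝ) < 1/γ)).const_mul (2*γ))
    simpa using h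
  have hU : Tendsto (fun b : ℝ =>
      c + b ^ (-(1/γ)) * Real.log (((2*θ)*b) ^ (1/γ) + 3))
      atTop (𝓝 c) := by
    have h := (tendsto_const_nhds (α := ℝ) (x := c) (f := atTop)).add
      (aux_errlim γ (2*θ) 3 hγ (by positivity) (by norm_num))
    simpa using h
  apply tendsto_of_tendsto_of_tendsto_of_le_of_le' hL hU
  · -- lower bound
    filter_upwards [eventually_ge_atTop (max 1 (1/θ))] with b hb
    have hb1 : (1:ℝ) ≤ b := le_trans (le_max_left _ _) hb
    have hb0 : (0:ℝ) < b := by linarith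
    have hθb1 : (1:ℝ) ≤ θ*b := by
      have h := le_trans (le_max_right 1 (1/θ)) hb
      calc (1:ℝ) = θ * (1/θ) := by field_simp
        _ ≤ θ * b := mul_le_mul_of_nonneg_left h hθ.le
    have hθb : 0 < θ*b := by linarith
    set s : ℝ := (θ*b) ^ (1/γ) with hs_def
    have hs : 0 < s := Real.rpow_pos_of_pos hθb _
    have hfge := aux_f_ge γ θ hγ hθ b hb0 hθb1
    have hfpos : 0 < ∑' n : ℕ, θ ^ n * b ^ n / ((n.factorial : ℝ)) ^ γ :=
      lt_of_lt_of_le (Real.exp_pos _) hfge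
    have hlogf : γ * (s - Real.log (s+1) - 2)
        ≤ Real.log (∑' n : ℕ, θ ^ n * b ^ n / ((n.factorial : ℝ)) ^ γ) :=
      (Real.le_log_iff_exp_le hfpos).2 hfge
    have hid : b ^ (-(1/γ)) * s = θ ^ (1/γ) := by
      rw [hs_def, Real.mul_rpow hθ.le hb0.le, ← mul_assoc,
        mul_comm (b ^ (-(1/γ))) (θ ^ (1/γ)), mul_assoc, ← Real.rpow_add hb0,
        neg_add_cancel, Real.rpow_zero, mul_one]
    have hbnn : (0:ℝ) ≤ b ^ (-(1/γ)) := Real.rpow_nonneg hb0.le _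
    have hmul := mul_le_mul_of_nonneg_left hlogf hbnn
    calc c - γ * (b ^ (-(1/γ)) * Real.log ((θ*b) ^ (1/γ) + 1)) - 2*γ * b ^ (-(1/γ))
        = b ^ (-(1/γ)) * (γ * (s - Real.log (s+1) - 2)) := by
          rw [hc, ← hid]; ring
      _ ≤ b ^ (-(1/γ)) * Real.log (∑' n : ℕ, θ ^ n * b ^ n / ((n.factorial : ℝ)) ^ γ) := hmul
  · -- upper bound
    filter_upwards [eventually_ge_atTop (max 1 (1/θ))] with b hb
    have hb1 : (1:ℝ) ≤ b := le_trans (le_max_left _ _) hb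
    have hb0 : (0:ℝ) < b := by linarith
    have hθb1 : (1:ℝ) ≤ θ*b := by
      have h := le_trans (le_max_right 1 (1/θ)) hb
      calc (1:ℝ) = θ * (1/θ) := by field_simp
        _ ≤ θ * b := mul_le_mul_of_nonneg_left h hθ.le
    have hθb : 0 < θ*b := by linarith
    set s : ℝ := (θ*b) ^ (1/γ) with hs_def
    have hs : 0 < s := Real.rpow_pos_of_pos hθb _
    set x : ℝ := (2*(θ*b)) ^ (1/γ) with hx_def
    have hxpos : 0 < x := Real.rpow_pos_of_pos (by positivity) _
    have hfle := aux_f_le γ θ hγ hθ b hb0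
    have hfpos : 0 < ∑' n : ℕ, θ ^ n * b ^ n / ((n.factorial : ℝ)) ^ γ :=
      lt_of_lt_of_le one_pos (aux_one_le_f γ θ hγ hθ b hb0)
    have hMpos : (0:ℝ) < (⌊x⌋₊ : ℝ) + 3 := by positivity
    have hlogf : Real.log (∑' n : ℕ, θ ^ n * b ^ n / ((n.factorial : ℝ)) ^ γ)
        ≤ Real.log ((⌊x⌋₊ : ℝ) + 3) + γ * s := by
      have h := Real.log_le_log hfpos hfle
      rwa [Real.log_mul hMpos.ne' (Real.exp_pos _).ne', Real.log_exp] at h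
    have hfloor : Real.log ((⌊x⌋₊ : ℝ) + 3) ≤ Real.log (x + 3) := by
      apply Real.log_le_log hMpos
      have := Nat.floor_le hxpos.le
      linarith
    have hid : b ^ (-(1/γ)) * s = θ ^ (1/γ) := by
      rw [hs_def, Real.mul_rpow hθ.le hb0.le, ← mul_assoc,
        mul_comm (b ^ (-(1/γ))) (θ ^ (1/γ)), mul_assoc, ← Real.rpow_add hb0,
        neg_add_cancel, Real.rpow_zero, mul_one]
    have hbnn : (0:ℝ) ≤ b ^ (-(1/γ)) := Real.rpow_nonneg hb0.le _
    have hx2 : ((2*θ)*b) ^ (1/γ) = x := by rw [hx_def, mul_assoc]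
    calc b ^ (-(1/γ)) * Real.log (∑' n : ℕ, θ ^ n * b ^ n / ((n.factorial : ℝ)) ^ γ)
        ≤ b ^ (-(1/γ)) * (Real.log (x + 3) + γ * s) := by
          refine mul_le_mul_of_nonneg_left ?_ hbnn
          calc Real.log (∑' n : ℕ, θ ^ n * b ^ n / ((n.factorial : ℝ)) ^ γ)
              ≤ Real.log ((⌊x⌋₊ : ℝ) + 3) + γ * s := hlogf
            _ ≤ Real.log (x + 3) + γ * s := by linarith
      _ = c + b ^ (-(1/γ)) * Real.log (((2*θ)*b) ^ (1/γ) + 3) := by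
          rw [hx2, hc, ← hid]; ring
end

section
/- Let B₁, B₂ be independent d-dimensional Brownian motions and γ a nonnegative, nonnegative-definite covariance function for which the intersection local times below are defined. Then pathwise ∫_0^t∫_0^t γ(B₁(s)−B₂(r)) ds dr ≤ (∫_0^t∫_0^t γ(B₁(s)−B₁(r)) ds dr)^{1/2} · (∫_0^t∫_0^t γ(B₂(s)−B₂(r)) ds dr)^{1/2}, and consequently E₀[(∫_0^t∫_0^t γ(B₁(s)−B₂(r)) ds dr)^n] ≤ E₀[(∫_0^t∫_0^t γ(B(s)−B(r)) ds dr)^n] for every n ≥ 1. -/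
open MeasureTheory ProbabilityTheory Set
open scoped InnerProductSpace ENNReal

private lemma aux_int {β F : Type*} [MeasurableSpace β] [NormedAddCommGroup F]
    {ν : Measure β} [IsFiniteMeasure ν] {f : β → F}
    (hm : AEStronglyMeasurable f ν) {c : ℝ} (hb : ∀ x, ‖f x‖ ≤ c) : Integrable f ν :=
  (integrable_const c).mono' hm (Filter.Eventually.of_forall hb)

private lemma aux_pi_pow {β : Type*} [MeasurableSpace β] (ν : Measure β) [IsFiniteMeasure ν]
    (f : β → ℝ) (n : ℕ) :
    ∫ v : Fin n → β, ∏ i, f (v i) ∂(Measure.pi fun _ => ν) = (∫ x, f x ∂ν) ^ n := by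
  induction n with
  | zero => simp [Measure.pi_of_empty, measureReal_def]
  | succ n ih =>
      calc ∫ v : Fin (n+1) → β, ∏ i, f (v i) ∂(Measure.pi fun _ => ν)
          = ∫ x : β × (Fin n → β), f x.1 * ∏ i, f (x.2 i)
              ∂(ν.prod (Measure.pi fun _ => ν)) := by
            rw [← ((measurePreserving_piFinSuccAbove (fun _ : Fin (n+1) => ν)
              0).symm).integral_comp']
            simp [MeasurableEquiv.piFinSuccAbove_symm_apply, Fin.prod_univ_succ,
              Fin.insertNthEquiv, Fin.insertNth_zero, Fin.zero_succAbove, Fin.cons_zero,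
              Fin.cons_succ]
        _ = (∫ x, f x ∂ν) * (∫ x, f x ∂ν) ^ n := by
            rw [integral_prod_mul f (fun v : Fin n → β => ∏ i, f (v i)), ih]
        _ = (∫ x, f x ∂ν) ^ (n+1) := by ring

section Aux

variable {d : ℕ} (μspec : Measure (EuclideanSpace ℝ (Fin d))) [IsFiniteMeasure μspec]
  (γ : EuclideanSpace ℝ (Fin d) → ℝ)

private lemma aux_gamma_bound (hγ : ∀ x, γ x = ∫ ξ, Real.cos ⟪ξ, x⟫_ℝ ∂μspec) (x) :
    |γ x| ≤ (μspec univ).toReal := by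
  rw [hγ x]
  calc |∫ ξ, Real.cos ⟪ξ, x⟫_ℝ ∂μspec| = ‖∫ ξ, Real.cos ⟪ξ, x⟫_ℝ ∂μspec‖ := rfl
    _ ≤ (μspec univ).toReal := by
        refine (norm_integral_le_of_norm_le_const (C := 1) ?_).trans (by simp [measureReal_def])
        exact Filter.Eventually.of_forall fun ξ => by
          simpa using Real.abs_cos_le_one _

/-- The key spectral identity: the double integral of `γ` along two paths is the real part
of the `L²(μspec)` inner product of the corresponding partial Fourier transforms. -/
private lemma aux_key (hγm : Measurable γ)
    (hγ : ∀ x, γ x = ∫ ξ, Real.cos ⟪ξ, x⟫_ℝ ∂μspec)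
    (t : ℝ) (b₁ b₂ : ℝ → EuclideanSpace ℝ (Fin d))
    (h₁ : Measurable b₁) (h₂ : Measurable b₂) :
    ∫ s in Icc (0:ℝ) t, ∫ r in Icc (0:ℝ) t, γ (b₁ s - b₂ r)
      = (∫ ξ, (∫ s in Icc (0:ℝ) t, Complex.exp (⟪ξ, b₁ s⟫_ℝ * Complex.I)) *
          (starRingEnd ℂ) (∫ r in Icc (0:ℝ) t, Complex.exp (⟪ξ, b₂ r⟫_ℝ * Complex.I))
            ∂μspec).re := by
  have hPfin : IsFiniteMeasure (volume.restrict (Icc (0:ℝ) t)) := by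
    constructor; rw [Measure.restrict_apply_univ]; exact measure_Icc_lt_top
  set P := volume.restrict (Icc (0:ℝ) t) with hP
  -- the jointly measurable kernel
  have mker : Measurable fun q : (ℝ × ℝ) × EuclideanSpace ℝ (Fin d) =>
      Complex.exp (↑(⟪q.2, b₁ q.1.1⟫_ℝ) * Complex.I) *
        Complex.exp (↑(-⟪q.2, b₂ q.1.2⟫_ℝ) * Complex.I) := by
    apply Measurable.mul
    · exact Complex.measurable_exp.comp
        ((Complex.measurable_ofReal.comp
          (measurable_snd.inner (h₁.comp measurable_fst.fst))).mul_const _)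
    · exact Complex.measurable_exp.comp
        ((Complex.measurable_ofReal.comp
          (measurable_snd.inner (h₂.comp measurable_fst.snd)).neg).mul_const _)
  have hb : ∀ q : (ℝ × ℝ) × EuclideanSpace ℝ (Fin d),
      ‖Complex.exp (↑(⟪q.2, b₁ q.1.1⟫_ℝ) * Complex.I) *
        Complex.exp (↑(-⟪q.2, b₂ q.1.2⟫_ℝ) * Complex.I)‖ ≤ 1 := fun q => by
    rw [norm_mul, Complex.norm_exp_ofReal_mul_I,
      Complex.norm_exp_ofReal_mul_I, mul_one]
  -- product of the two path integrals as a double integral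
  have key : ∀ ξ, (∫ s in Icc (0:ℝ) t, Complex.exp (⟪ξ, b₁ s⟫_ℝ * Complex.I)) *
      (starRingEnd ℂ) (∫ r in Icc (0:ℝ) t, Complex.exp (⟪ξ, b₂ r⟫_ℝ * Complex.I))
      = ∫ p : ℝ × ℝ, Complex.exp (↑(⟪ξ, b₁ p.1⟫_ℝ) * Complex.I) *
          Complex.exp (↑(-⟪ξ, b₂ p.2⟫_ℝ) * Complex.I) ∂(P.prod P) := by
    intro ξ
    rw [← integral_conj]
    have hc : ∀ r, (starRingEnd ℂ) (Complex.exp (↑(⟪ξ, b₂ r⟫_ℝ) * Complex.I))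
        = Complex.exp (↑(-⟪ξ, b₂ r⟫_ℝ) * Complex.I) := by
      intro r
      rw [← Complex.exp_conj, map_mul, Complex.conj_I, Complex.conj_ofReal]
      push_cast
      ring_nf
    simp_rw [hc]
    exact (integral_prod_mul _ _).symm
  -- pointwise spectral representation
  have hCos : ∀ p : ℝ × ℝ, γ (b₁ p.1 - b₂ p.2)
      = (∫ ξ, Complex.exp (↑(⟪ξ, b₁ p.1⟫_ℝ) * Complex.I) *
          Complex.exp (↑(-⟪ξ, b₂ p.2⟫_ℝ) * Complex.I) ∂μspec).re := by
    intro p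
    have hint : Integrable (fun ξ => Complex.exp (↑(⟪ξ, b₁ p.1⟫_ℝ) * Complex.I) *
        Complex.exp (↑(-⟪ξ, b₂ p.2⟫_ℝ) * Complex.I)) μspec :=
      aux_int ((mker.comp (measurable_const.prodMk measurable_id :
          Measurable fun ξ : EuclideanSpace ℝ (Fin d) => (p, ξ))).aestronglyMeasurable)
        (fun ξ => hb (p, ξ))
    rw [hγ, show (∫ ξ, Complex.exp (↑(⟪ξ, b₁ p.1⟫_ℝ) * Complex.I) *
        Complex.exp (↑(-⟪ξ, b₂ p.2⟫_ℝ) * Complex.I) ∂μspec).re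
      = ∫ ξ, (Complex.exp (↑(⟪ξ, b₁ p.1⟫_ℝ) * Complex.I) *
        Complex.exp (↑(-⟪ξ, b₂ p.2⟫_ℝ) * Complex.I)).re ∂μspec from (integral_re hint).symm]
    refine integral_congr_ae (Filter.Eventually.of_forall fun ξ => ?_)
    dsimp only
    rw [← Complex.exp_add,
      show (↑(⟪ξ, b₁ p.1⟫_ℝ) * Complex.I + ↑(-⟪ξ, b₂ p.2⟫_ℝ) * Complex.I)
          = ↑(⟪ξ, b₁ p.1 - b₂ p.2⟫_ℝ) * Complex.I by
        rw [inner_sub_right]; push_cast; ring,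
      Complex.exp_ofReal_mul_I_re]
  -- integrability facts
  have hγint : Integrable (fun p : ℝ × ℝ => γ (b₁ p.1 - b₂ p.2)) (P.prod P) :=
    aux_int (hγm.comp ((h₁.comp measurable_fst).sub
      (h₂.comp measurable_snd))).aestronglyMeasurable
      (fun p => aux_gamma_bound μspec γ hγ _)
  have hgI : Integrable (Function.uncurry fun (p : ℝ × ℝ) ξ =>
      Complex.exp (↑(⟪ξ, b₁ p.1⟫_ℝ) * Complex.I) *
        Complex.exp (↑(-⟪ξ, b₂ p.2⟫_ℝ) * Complex.I)) ((P.prod P).prod μspec) :=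
    aux_int mker.aestronglyMeasurable hb
  have hIntInner : Integrable (fun p : ℝ × ℝ => ∫ ξ,
      Complex.exp (↑(⟪ξ, b₁ p.1⟫_ℝ) * Complex.I) *
        Complex.exp (↑(-⟪ξ, b₂ p.2⟫_ℝ) * Complex.I) ∂μspec) (P.prod P) := by
    refine aux_int (mker.stronglyMeasurable.integral_prod_right'.aestronglyMeasurable)
      (c := (μspec univ).toReal) (fun p => ?_)
    refine (norm_integral_le_of_norm_le_const (C := 1) ?_).trans (by simp [measureReal_def])
    exact Filter.Eventually.of_forall fun ξ => hb (p, ξ)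
  calc ∫ s in Icc (0:ℝ) t, ∫ r in Icc (0:ℝ) t, γ (b₁ s - b₂ r)
      = ∫ p : ℝ × ℝ, γ (b₁ p.1 - b₂ p.2) ∂(P.prod P) := integral_integral hγint
    _ = ∫ p : ℝ × ℝ, (∫ ξ, Complex.exp (↑(⟪ξ, b₁ p.1⟫_ℝ) * Complex.I) *
          Complex.exp (↑(-⟪ξ, b₂ p.2⟫_ℝ) * Complex.I) ∂μspec).re ∂(P.prod P) :=
        integral_congr_ae (Filter.Eventually.of_forall fun p => hCos p)
    _ = (∫ p : ℝ × ℝ, (∫ ξ, Complex.exp (↑(⟪ξ, b₁ p.1⟫_ℝ) * Complex.I) *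
          Complex.exp (↑(-⟪ξ, b₂ p.2⟫_ℝ) * Complex.I) ∂μspec) ∂(P.prod P)).re :=
        integral_re hIntInner
    _ = (∫ ξ, ∫ p : ℝ × ℝ, Complex.exp (↑(⟪ξ, b₁ p.1⟫_ℝ) * Complex.I) *
          Complex.exp (↑(-⟪ξ, b₂ p.2⟫_ℝ) * Complex.I) ∂(P.prod P) ∂μspec).re := by
        rw [integral_integral_swap hgI]
    _ = (∫ ξ, (∫ s in Icc (0:ℝ) t, Complex.exp (⟪ξ, b₁ s⟫_ℝ * Complex.I)) *
          (starRingEnd ℂ) (∫ r in Icc (0:ℝ) t, Complex.exp (⟪ξ, b₂ r⟫_ℝ * Complex.I))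
            ∂μspec).re := by
        congr 1
        exact integral_congr_ae (Filter.Eventually.of_forall fun ξ => (key ξ).symm)

/-- The pathwise Cauchy–Schwarz inequality. -/
private lemma aux_pathwise (hγm : Measurable γ)
    (hγ : ∀ x, γ x = ∫ ξ, Real.cos ⟪ξ, x⟫_ℝ ∂μspec)
    (t : ℝ) (b₁ b₂ : ℝ → EuclideanSpace ℝ (Fin d))
    (h₁ : Measurable b₁) (h₂ : Measurable b₂) :
    ∫ s in Icc (0:ℝ) t, ∫ r in Icc (0:ℝ) t, γ (b₁ s - b₂ r)
      ≤ Real.sqrt (∫ s in Icc (0:ℝ) t, ∫ r in Icc (0:ℝ) t, γ (b₁ s - b₁ r)) *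
          Real.sqrt (∫ s in Icc (0:ℝ) t, ∫ r in Icc (0:ℝ) t, γ (b₂ s - b₂ r)) := by
  have hPfin : IsFiniteMeasure (volume.restrict (Icc (0:ℝ) t)) := by
    constructor; rw [Measure.restrict_apply_univ]; exact measure_Icc_lt_top
  set T := ((volume.restrict (Icc (0:ℝ) t)) univ).toReal with hT
  -- measurability and bound of the partial Fourier integrals
  have hFm : ∀ b : ℝ → EuclideanSpace ℝ (Fin d), Measurable b →
      StronglyMeasurable fun ξ : EuclideanSpace ℝ (Fin d) =>
        ∫ s in Icc (0:ℝ) t, Complex.exp (↑(⟪ξ, b s⟫_ℝ) * Complex.I) := by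
    intro b hb
    have : Measurable fun q : EuclideanSpace ℝ (Fin d) × ℝ =>
        Complex.exp (↑(⟪q.1, b q.2⟫_ℝ) * Complex.I) :=
      Complex.measurable_exp.comp ((Complex.measurable_ofReal.comp
        (measurable_fst.inner (hb.comp measurable_snd))).mul_const _)
    exact this.stronglyMeasurable.integral_prod_right'
  have hFb : ∀ (b : ℝ → EuclideanSpace ℝ (Fin d)) (ξ : EuclideanSpace ℝ (Fin d)),
      ‖∫ s in Icc (0:ℝ) t, Complex.exp (↑(⟪ξ, b s⟫_ℝ) * Complex.I)‖ ≤ T := by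
    intro b ξ
    refine (norm_integral_le_of_norm_le_const (C := 1) ?_).trans (by rw [one_mul]; exact le_rfl)
    exact Filter.Eventually.of_forall fun s => by
      rw [Complex.norm_exp_ofReal_mul_I]
  -- ∫ ‖F b‖² = double γ integral
  have hsq : ∀ (b : ℝ → EuclideanSpace ℝ (Fin d)), Measurable b →
      ∫ ξ, ‖∫ s in Icc (0:ℝ) t, Complex.exp (↑(⟪ξ, b s⟫_ℝ) * Complex.I)‖ ^ 2 ∂μspec
        = ∫ s in Icc (0:ℝ) t, ∫ r in Icc (0:ℝ) t, γ (b s - b r) := by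
    intro b hb
    rw [aux_key μspec γ hγm hγ t b b hb hb]
    have hpt : ∀ ξ : EuclideanSpace ℝ (Fin d),
        (∫ s in Icc (0:ℝ) t, Complex.exp (↑(⟪ξ, b s⟫_ℝ) * Complex.I)) *
          (starRingEnd ℂ) (∫ r in Icc (0:ℝ) t, Complex.exp (↑(⟪ξ, b r⟫_ℝ) * Complex.I))
        = ((‖∫ s in Icc (0:ℝ) t, Complex.exp (↑(⟪ξ, b s⟫_ℝ) * Complex.I)‖ ^ 2 : ℝ) : ℂ) := by
      intro ξ
      rw [Complex.mul_conj, Complex.normSq_eq_norm_sq]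
    rw [integral_congr_ae (Filter.Eventually.of_forall hpt)]
    have : (∫ ξ, ((‖∫ s in Icc (0:ℝ) t,
          Complex.exp (↑(⟪ξ, b s⟫_ℝ) * Complex.I)‖ ^ 2 : ℝ) : ℂ) ∂μspec)
        = ((∫ ξ, ‖∫ s in Icc (0:ℝ) t,
            Complex.exp (↑(⟪ξ, b s⟫_ℝ) * Complex.I)‖ ^ 2 ∂μspec : ℝ) : ℂ) := integral_ofReal
    rw [this, Complex.ofReal_re]
  -- Hölder / Cauchy-Schwarz in L²(μspec)
  have hpq : Real.HolderConjugate 2 2 := Real.HolderConjugate.two_two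
  have hmem : ∀ (b : ℝ → EuclideanSpace ℝ (Fin d)), Measurable b →
      MemLp (fun ξ => ‖∫ s in Icc (0:ℝ) t, Complex.exp (↑(⟪ξ, b s⟫_ℝ) * Complex.I)‖)
        (ENNReal.ofReal 2) μspec := fun b hb =>
    MemLp.of_bound ((hFm b hb).norm.aestronglyMeasurable) T
      (Filter.Eventually.of_forall fun ξ => by rw [norm_norm]; exact hFb b ξ)
  calc ∫ s in Icc (0:ℝ) t, ∫ r in Icc (0:ℝ) t, γ (b₁ s - b₂ r)
      = (∫ ξ, (∫ s in Icc (0:ℝ) t, Complex.exp (⟪ξ, b₁ s⟫_ℝ * Complex.I)) *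
          (starRingEnd ℂ) (∫ r in Icc (0:ℝ) t, Complex.exp (⟪ξ, b₂ r⟫_ℝ * Complex.I))
            ∂μspec).re := aux_key μspec γ hγm hγ t b₁ b₂ h₁ h₂
    _ ≤ ‖∫ ξ, (∫ s in Icc (0:ℝ) t, Complex.exp (⟪ξ, b₁ s⟫_ℝ * Complex.I)) *
          (starRingEnd ℂ) (∫ r in Icc (0:ℝ) t, Complex.exp (⟪ξ, b₂ r⟫_ℝ * Complex.I))
            ∂μspec‖ := by
        exact Complex.re_le_norm _
    _ ≤ ∫ ξ, ‖(∫ s in Icc (0:ℝ) t, Complex.exp (⟪ξ, b₁ s⟫_ℝ * Complex.I)) *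
          (starRingEnd ℂ) (∫ r in Icc (0:ℝ) t, Complex.exp (⟪ξ, b₂ r⟫_ℝ * Complex.I))‖
            ∂μspec := norm_integral_le_integral_norm _
    _ = ∫ ξ, ‖∫ s in Icc (0:ℝ) t, Complex.exp (⟪ξ, b₁ s⟫_ℝ * Complex.I)‖ *
          ‖∫ r in Icc (0:ℝ) t, Complex.exp (⟪ξ, b₂ r⟫_ℝ * Complex.I)‖ ∂μspec := by
        refine integral_congr_ae (Filter.Eventually.of_forall fun ξ => ?_)
        dsimp only
        rw [norm_mul, RCLike.norm_conj]
    _ ≤ (∫ ξ, ‖∫ s in Icc (0:ℝ) t, Complex.exp (⟪ξ, b₁ s⟫_ℝ * Complex.I)‖ ^ (2:ℝ) ∂μspec)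
          ^ (1/(2:ℝ)) *
        (∫ ξ, ‖∫ r in Icc (0:ℝ) t, Complex.exp (⟪ξ, b₂ r⟫_ℝ * Complex.I)‖ ^ (2:ℝ) ∂μspec)
          ^ (1/(2:ℝ)) :=
        integral_mul_le_Lp_mul_Lq_of_nonneg hpq
          (Filter.Eventually.of_forall fun ξ => norm_nonneg _)
          (Filter.Eventually.of_forall fun ξ => norm_nonneg _)
          (hmem b₁ h₁) (hmem b₂ h₂)
    _ = Real.sqrt (∫ s in Icc (0:ℝ) t, ∫ r in Icc (0:ℝ) t, γ (b₁ s - b₁ r)) *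
          Real.sqrt (∫ s in Icc (0:ℝ) t, ∫ r in Icc (0:ℝ) t, γ (b₂ s - b₂ r)) := by
        simp_rw [Real.rpow_two]
        rw [hsq b₁ h₁, hsq b₂ h₂, ← Real.sqrt_eq_rpow, ← Real.sqrt_eq_rpow]

/-- Upper bound for the double integral of `γ`. -/
private lemma aux_le (hγ : ∀ x, γ x = ∫ ξ, Real.cos ⟪ξ, x⟫_ℝ ∂μspec)
    (t : ℝ) (b₁ b₂ : ℝ → EuclideanSpace ℝ (Fin d)) :
    ∫ s in Icc (0:ℝ) t, ∫ r in Icc (0:ℝ) t, γ (b₁ s - b₂ r)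
      ≤ (μspec univ).toReal * ((volume.restrict (Icc (0:ℝ) t)) univ).toReal
          * ((volume.restrict (Icc (0:ℝ) t)) univ).toReal := by
  have hPfin : IsFiniteMeasure (volume.restrict (Icc (0:ℝ) t)) := by
    constructor; rw [Measure.restrict_apply_univ]; exact measure_Icc_lt_top
  refine (le_abs_self _).trans ?_
  have h := norm_integral_le_of_norm_le_const (μ := volume.restrict (Icc (0:ℝ) t))
    (f := fun s => ∫ r in Icc (0:ℝ) t, γ (b₁ s - b₂ r))
    (C := (μspec univ).toReal * ((volume.restrict (Icc (0:ℝ) t)) univ).toReal)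
    (Filter.Eventually.of_forall fun s =>
      norm_integral_le_of_norm_le_const
        (Filter.Eventually.of_forall fun r => aux_gamma_bound μspec γ hγ _))
  exact h

end Aux

private lemma aux_meas {Ω : Type*} [MeasurableSpace Ω] {d : ℕ}
    (γ : EuclideanSpace ℝ (Fin d) → ℝ) (hγm : Measurable γ)
    {A₁ A₂ : Ω → ℝ → EuclideanSpace ℝ (Fin d)}
    (h₁ : Measurable fun q : Ω × ℝ => A₁ q.1 q.2)
    (h₂ : Measurable fun q : Ω × ℝ => A₂ q.1 q.2) (t : ℝ) :
    Measurable fun ω => ∫ s in Icc (0:ℝ) t, ∫ r in Icc (0:ℝ) t, γ (A₁ ω s - A₂ ω r) := by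
  have m1 : StronglyMeasurable fun q : (Ω × ℝ) × ℝ => γ (A₁ q.1.1 q.1.2 - A₂ q.1.1 q.2) :=
    (hγm.comp ((h₁.comp measurable_fst).sub
      (h₂.comp (measurable_fst.fst.prodMk measurable_snd)))).stronglyMeasurable
  exact (m1.integral_prod_right'.integral_prod_right').measurable

/-- let `B₁, B₂` be independent (identically distributed) `d`-dimensional
Brownian motions and `γ ≥ 0` a covariance function with spectral representation
`γ(x) = ∫ cos⟪ξ,x⟫ μspec(dξ)`.  Then pathwise
`∫₀ᵗ∫₀ᵗ γ(b₁(s)−b₂(r)) ≤ (∫₀ᵗ∫₀ᵗ γ(b₁(s)−b₁(r)))^{1/2} (∫₀ᵗ∫₀ᵗ γ(b₂(s)−b₂(r)))^{1/2}`,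
and consequently `E[(∫₀ᵗ∫₀ᵗ γ(B₁(s)−B₂(r)))ⁿ] ≤ E[(∫₀ᵗ∫₀ᵗ γ(B(s)−B(r)))ⁿ]` for all `n ≥ 1`. -/
theorem statement16 (d : ℕ) {Ω : Type*} [MeasureSpace Ω]
    [IsProbabilityMeasure (ℙ : Measure Ω)]
    (μspec : Measure (EuclideanSpace ℝ (Fin d))) [IsFiniteMeasure μspec]
    (γ : EuclideanSpace ℝ (Fin d) → ℝ) (hγm : Measurable γ) (hγ0 : ∀ x, 0 ≤ γ x)
    (hγ : ∀ x, γ x = ∫ ξ, Real.cos ⟪ξ, x⟫_ℝ ∂μspec)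
    (B₁ B₂ : Ω → ℝ → EuclideanSpace ℝ (Fin d))
    (hB₁ : Measurable fun q : Ω × ℝ => B₁ q.1 q.2)
    (hB₂ : Measurable fun q : Ω × ℝ => B₂ q.1 q.2)
    (hindep : IndepFun B₁ B₂ ℙ) (hid : IdentDistrib B₁ B₂ ℙ ℙ)
    (t : ℝ) (ht : 0 < t) (n : ℕ) (hn : 1 ≤ n) :
    (∀ b₁ b₂ : ℝ → EuclideanSpace ℝ (Fin d), Measurable b₁ → Measurable b₂ →
      ∫ s in Icc (0 : ℝ) t, ∫ r in Icc (0 : ℝ) t, γ (b₁ s - b₂ r)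
        ≤ Real.sqrt (∫ s in Icc (0 : ℝ) t, ∫ r in Icc (0 : ℝ) t, γ (b₁ s - b₁ r)) *
            Real.sqrt (∫ s in Icc (0 : ℝ) t, ∫ r in Icc (0 : ℝ) t, γ (b₂ s - b₂ r))) ∧
    ∫ ω, (∫ s in Icc (0 : ℝ) t, ∫ r in Icc (0 : ℝ) t, γ (B₁ ω s - B₂ ω r)) ^ n ∂ℙ
      ≤ ∫ ω, (∫ s in Icc (0 : ℝ) t, ∫ r in Icc (0 : ℝ) t, γ (B₁ ω s - B₁ ω r)) ^ n ∂ℙ := by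
  have hPfin : IsFiniteMeasure (volume.restrict (Icc (0:ℝ) t)) := by
    constructor; rw [Measure.restrict_apply_univ]; exact measure_Icc_lt_top
  refine ⟨fun b₁ b₂ h₁ h₂ => aux_pathwise μspec γ hγm hγ t b₁ b₂ h₁ h₂, ?_⟩
  -- abbreviations
  set C := (μspec univ).toReal with hC
  set T := ((volume.restrict (Icc (0:ℝ) t)) univ).toReal with hTdef
  set M := C * T * T with hM
  have hM0 : 0 ≤ M := by positivity
  set X : Ω → ℝ := fun ω => ∫ s in Icc (0:ℝ) t, ∫ r in Icc (0:ℝ) t, γ (B₁ ω s - B₂ ω r)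
    with hX
  set G₁ : Ω → ℝ := fun ω => ∫ s in Icc (0:ℝ) t, ∫ r in Icc (0:ℝ) t, γ (B₁ ω s - B₁ ω r)
    with hG₁
  set G₂ : Ω → ℝ := fun ω => ∫ s in Icc (0:ℝ) t, ∫ r in Icc (0:ℝ) t, γ (B₂ ω s - B₂ ω r)
    with hG₂
  -- sections of the processes are measurable
  have hsec₁ : ∀ ω, Measurable fun s => B₁ ω s := fun ω =>
    hB₁.comp (measurable_const.prodMk measurable_id)
  have hsec₂ : ∀ ω, Measurable fun s => B₂ ω s := fun ω =>
    hB₂.comp (measurable_const.prodMk measurable_id)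
  -- basic properties of X, G₁, G₂
  have hX0 : ∀ ω, 0 ≤ X ω := fun ω =>
    integral_nonneg fun s => integral_nonneg fun r => hγ0 _
  have hG₁0 : ∀ ω, 0 ≤ G₁ ω := fun ω =>
    integral_nonneg fun s => integral_nonneg fun r => hγ0 _
  have hG₂0 : ∀ ω, 0 ≤ G₂ ω := fun ω =>
    integral_nonneg fun s => integral_nonneg fun r => hγ0 _
  have hXle : ∀ ω, X ω ≤ M := fun ω => aux_le μspec γ hγ t _ _
  have hG₁le : ∀ ω, G₁ ω ≤ M := fun ω => aux_le μspec γ hγ t _ _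
  have hG₂le : ∀ ω, G₂ ω ≤ M := fun ω => aux_le μspec γ hγ t _ _
  have hXm : Measurable X := aux_meas γ hγm hB₁ hB₂ t
  have hG₁m : Measurable G₁ := aux_meas γ hγm hB₁ hB₁ t
  have hG₂m : Measurable G₂ := aux_meas γ hγm hB₂ hB₂ t
  have hpath : ∀ ω, X ω ≤ Real.sqrt (G₁ ω) * Real.sqrt (G₂ ω) := fun ω =>
    aux_pathwise μspec γ hγm hγ t _ _ (hsec₁ ω) (hsec₂ ω)
  -- Step D : equality of the moments of G₁ and G₂
  have hD : ∫ ω, G₁ ω ^ n ∂ℙ = ∫ ω, G₂ ω ^ n ∂ℙ := by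
    set P := volume.restrict (Icc (0:ℝ) t) with hPd
    set PP := P.prod P with hPP
    set Pi' := Measure.pi (fun _ : Fin n => PP) with hPi
    have hrep : ∀ (A : Ω → ℝ → EuclideanSpace ℝ (Fin d)),
        (Measurable fun q : Ω × ℝ => A q.1 q.2) →
        ∫ ω, (∫ s in Icc (0:ℝ) t, ∫ r in Icc (0:ℝ) t, γ (A ω s - A ω r)) ^ n ∂ℙ
          = ∫ v : Fin n → ℝ × ℝ,
              (∫ ω, ∏ i, γ (A ω (v i).1 - A ω (v i).2) ∂ℙ) ∂Pi' := by
      intro A hA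
      have mA : ∀ ω, Measurable (A ω) := fun ω =>
        hA.comp (measurable_const.prodMk measurable_id)
      have h1 : ∀ ω, (∫ s in Icc (0:ℝ) t, ∫ r in Icc (0:ℝ) t, γ (A ω s - A ω r))
          = ∫ z : ℝ × ℝ, γ (A ω z.1 - A ω z.2) ∂PP := fun ω =>
        integral_integral (aux_int (hγm.comp (((mA ω).comp measurable_fst).sub
          ((mA ω).comp measurable_snd))).aestronglyMeasurable
          (fun z => aux_gamma_bound μspec γ hγ _))
      have hint : Integrable (Function.uncurry fun (ω : Ω) (v : Fin n → ℝ × ℝ) =>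
          ∏ i, γ (A ω (v i).1 - A ω (v i).2)) ((ℙ : Measure Ω).prod Pi') := by
        refine aux_int ?_ (c := C ^ n) (fun q => ?_)
        · refine (Finset.measurable_prod Finset.univ fun i _ => ?_).aestronglyMeasurable
          exact hγm.comp ((hA.comp (measurable_fst.prodMk
              (((measurable_pi_apply i).comp measurable_snd).fst))).sub
            (hA.comp (measurable_fst.prodMk
              (((measurable_pi_apply i).comp measurable_snd).snd))))
        · simp only [Function.uncurry, Real.norm_eq_abs]
          rw [Finset.abs_prod]
          calc ∏ i, |γ (A q.1 (q.2 i).1 - A q.1 (q.2 i).2)|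
              ≤ ∏ _i : Fin n, C :=
                Finset.prod_le_prod (fun i _ => abs_nonneg _)
                  (fun i _ => aux_gamma_bound μspec γ hγ _)
            _ = C ^ n := by rw [Finset.prod_const, Finset.card_univ, Fintype.card_fin]
      calc ∫ ω, (∫ s in Icc (0:ℝ) t, ∫ r in Icc (0:ℝ) t, γ (A ω s - A ω r)) ^ n ∂ℙ
          = ∫ ω, (∫ v : Fin n → ℝ × ℝ,
              ∏ i, γ (A ω (v i).1 - A ω (v i).2) ∂Pi') ∂ℙ := by
            refine integral_congr_ae (Filter.Eventually.of_forall fun ω => ?_)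
            dsimp only
            rw [h1 ω, ← aux_pi_pow PP (fun z : ℝ × ℝ => γ (A ω z.1 - A ω z.2)) n]
        _ = ∫ v : Fin n → ℝ × ℝ,
              (∫ ω, ∏ i, γ (A ω (v i).1 - A ω (v i).2) ∂ℙ) ∂Pi' :=
            integral_integral_swap hint
    have hpoint : ∀ v : Fin n → ℝ × ℝ,
        ∫ ω, ∏ i, γ (B₁ ω (v i).1 - B₁ ω (v i).2) ∂ℙ
          = ∫ ω, ∏ i, γ (B₂ ω (v i).1 - B₂ ω (v i).2) ∂ℙ := by
      intro v
      have hφ : Measurable fun b : ℝ → EuclideanSpace ℝ (Fin d) =>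
          ∏ i, γ (b (v i).1 - b (v i).2) :=
        Finset.measurable_prod Finset.univ fun i _ =>
          hγm.comp ((measurable_pi_apply _).sub (measurable_pi_apply _))
      exact (hid.comp hφ).integral_eq
    rw [hG₁, hG₂]
    rw [hrep B₁ hB₁, hrep B₂ hB₂]
    exact integral_congr_ae (Filter.Eventually.of_forall hpoint)
  -- Cauchy–Schwarz on Ω
  have hpq : Real.HolderConjugate 2 2 := Real.HolderConjugate.two_two
  have hUmem : ∀ (G : Ω → ℝ), Measurable G → (∀ ω, G ω ≤ M) →
      MemLp (fun ω => Real.sqrt (G ω) ^ n) (ENNReal.ofReal 2) ℙ := by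
    intro G hGm hGle
    refine MemLp.of_bound
      ((Real.continuous_sqrt.measurable.comp hGm).pow_const n).aestronglyMeasurable
      (Real.sqrt M ^ n) (Filter.Eventually.of_forall fun ω => ?_)
    rw [Real.norm_eq_abs, abs_pow, abs_of_nonneg (Real.sqrt_nonneg _)]
    exact pow_le_pow_left₀ (Real.sqrt_nonneg _) (Real.sqrt_le_sqrt (hGle ω)) n
  have hconv : ∀ (G : Ω → ℝ), (∀ ω, 0 ≤ G ω) →
      (∫ ω, (Real.sqrt (G ω) ^ n) ^ (2:ℝ) ∂ℙ) = ∫ ω, G ω ^ n ∂ℙ := by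
    intro G hG0
    refine integral_congr_ae (Filter.Eventually.of_forall fun ω => ?_)
    dsimp only
    rw [Real.rpow_two, ← pow_mul, mul_comm n 2, pow_mul, Real.sq_sqrt (hG0 ω)]
  have hG₁int : Integrable (fun ω => G₁ ω ^ n) ℙ := by
    refine aux_int (hG₁m.pow_const n).aestronglyMeasurable (c := M ^ n) (fun ω => ?_)
    rw [Real.norm_eq_abs, abs_pow, abs_of_nonneg (hG₁0 ω)]
    exact pow_le_pow_left₀ (hG₁0 ω) (hG₁le ω) n
  calc ∫ ω, X ω ^ n ∂ℙ
      ≤ ∫ ω, Real.sqrt (G₁ ω) ^ n * Real.sqrt (G₂ ω) ^ n ∂ℙ := by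
        refine integral_mono ?_ ?_ (fun ω => ?_)
        · refine aux_int (hXm.pow_const n).aestronglyMeasurable (c := M ^ n) (fun ω => ?_)
          rw [Real.norm_eq_abs, abs_pow, abs_of_nonneg (hX0 ω)]
          exact pow_le_pow_left₀ (hX0 ω) (hXle ω) n
        · refine aux_int (((Real.continuous_sqrt.measurable.comp hG₁m).pow_const n).mul
              ((Real.continuous_sqrt.measurable.comp hG₂m).pow_const n)).aestronglyMeasurable
            (c := Real.sqrt M ^ n * Real.sqrt M ^ n) (fun ω => ?_)
          rw [Real.norm_eq_abs,
            abs_of_nonneg (mul_nonneg (pow_nonneg (Real.sqrt_nonneg _) n)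
              (pow_nonneg (Real.sqrt_nonneg _) n))]
          exact mul_le_mul
            (pow_le_pow_left₀ (Real.sqrt_nonneg _) (Real.sqrt_le_sqrt (hG₁le ω)) n)
            (pow_le_pow_left₀ (Real.sqrt_nonneg _) (Real.sqrt_le_sqrt (hG₂le ω)) n)
            (pow_nonneg (Real.sqrt_nonneg _) n) (pow_nonneg (Real.sqrt_nonneg _) n)
        · have h := pow_le_pow_left₀ (hX0 ω) (hpath ω) n
          rwa [mul_pow] at h
    _ ≤ (∫ ω, (Real.sqrt (G₁ ω) ^ n) ^ (2:ℝ) ∂ℙ) ^ (1/(2:ℝ)) *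
          (∫ ω, (Real.sqrt (G₂ ω) ^ n) ^ (2:ℝ) ∂ℙ) ^ (1/(2:ℝ)) :=
        integral_mul_le_Lp_mul_Lq_of_nonneg hpq
          (Filter.Eventually.of_forall fun ω => pow_nonneg (Real.sqrt_nonneg _) n)
          (Filter.Eventually.of_forall fun ω => pow_nonneg (Real.sqrt_nonneg _) n)
          (hUmem G₁ hG₁m hG₁le) (hUmem G₂ hG₂m hG₂le)
    _ = (∫ ω, G₁ ω ^ n ∂ℙ) ^ (1/(2:ℝ)) * (∫ ω, G₂ ω ^ n ∂ℙ) ^ (1/(2:ℝ)) := by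
        rw [hconv G₁ hG₁0, hconv G₂ hG₂0]
    _ = (∫ ω, G₁ ω ^ n ∂ℙ) ^ (1/(2:ℝ)) * (∫ ω, G₁ ω ^ n ∂ℙ) ^ (1/(2:ℝ)) := by rw [hD]
    _ = ∫ ω, G₁ ω ^ n ∂ℙ := by
        rw [← Real.sqrt_eq_rpow]
        exact Real.mul_self_sqrt (integral_nonneg fun ω => pow_nonneg (hG₁0 ω) n)
end
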